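/- Let 1 < p < ∞ and let θ̄ be a dual vector with ‖θ̄‖_{p,*} = 1. If q₁, q₂ satisfy ‖q₁‖_{p,*} ≤ α₁, ‖q₂‖_{p,*} ≤ α₂, and q₁ + q₂ = (α₁ + α₂)·θ̄, then necessarily q₁ = α₁·θ̄ and q₂ = α₂·θ̄. -/

import Mathlib

noncomputable def pnorm {n : ℕ} (p : ℝ) (v : Fin n → ℝ) : ℝ :=
  (∑ i, |v i| ^ p) ^ (1 / p)

lemma abs_rpow_convex_aux {r : ℝ} (hr : 1 < r) {x y a b : ℝ}
    (ha : 0 < a) (hb : 0 < b) (hab : a + b = 1) :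
    |a * x + b * y| ^ r ≤ a * |x| ^ r + b * |y| ^ r := by
  have h1 : |a * x + b * y| ^ r ≤ (a * |x| + b * |y|) ^ r := by
    apply Real.rpow_le_rpow (abs_nonneg _) ?_ (by positivity)
    calc |a * x + b * y| ≤ |a * x| + |b * y| := abs_add_le _ _
      _ = a * |x| + b * |y| := by
          rw [abs_mul, abs_mul, abs_of_pos ha, abs_of_pos hb]
  have h2 : (a * |x| + b * |y|) ^ r ≤ a * |x| ^ r + b * |y| ^ r := by
    have := (convexOn_rpow hr.le).2 (Set.mem_Ici.2 (abs_nonneg x))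
      (Set.mem_Ici.2 (abs_nonneg y)) ha.le hb.le hab
    simpa [smul_eq_mul] using this
  linarith

lemma abs_rpow_strict_convex_aux {r : ℝ} (hr : 1 < r) {x y a b : ℝ} (hxy : x ≠ y)
    (ha : 0 < a) (hb : 0 < b) (hab : a + b = 1) :
    |a * x + b * y| ^ r < a * |x| ^ r + b * |y| ^ r := by
  by_cases habs : |x| = |y|
  · -- then x = -y with y ≠ 0, strict triangle inequality
    have hy0 : y ≠ 0 := by
      rintro rfl
      simp only [abs_zero, abs_eq_zero] at habs
      exact hxy (by simp [habs])
    have hxny : x = -y := by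
      rcases abs_eq_abs.mp habs with h | h
      · exact absurd h hxy
      · exact h
    have hstrict : |a * x + b * y| < a * |x| + b * |y| := by
      rw [hxny, abs_neg]
      have : a * (-y) + b * y = (b - a) * y := by ring
      rw [this, abs_mul]
      have h1 : |b - a| < a + b := by
        rw [abs_sub_lt_iff]; constructor <;> linarith
      have h2 : |b - a| * |y| < (a + b) * |y| :=
        mul_lt_mul_of_pos_right h1 (abs_pos.mpr hy0)
      linarith [h2]
    have h1 : |a * x + b * y| ^ r < (a * |x| + b * |y|) ^ r :=
      Real.rpow_lt_rpow (abs_nonneg _) hstrict (lt_trans one_pos hr)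
    have h2 : (a * |x| + b * |y|) ^ r ≤ a * |x| ^ r + b * |y| ^ r := by
      have := (convexOn_rpow hr.le).2 (Set.mem_Ici.2 (abs_nonneg x))
        (Set.mem_Ici.2 (abs_nonneg y)) ha.le hb.le hab
      simpa [smul_eq_mul] using this
    linarith
  · have h1 : |a * x + b * y| ^ r ≤ (a * |x| + b * |y|) ^ r := by
      apply Real.rpow_le_rpow (abs_nonneg _) ?_ (by positivity)
      calc |a * x + b * y| ≤ |a * x| + |b * y| := abs_add_le _ _
        _ = a * |x| + b * |y| := by
            rw [abs_mul, abs_mul, abs_of_pos ha, abs_of_pos hb]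
    have h2 : (a * |x| + b * |y|) ^ r < a * |x| ^ r + b * |y| ^ r := by
      have := (strictConvexOn_rpow hr).2 (Set.mem_Ici.2 (abs_nonneg x))
        (Set.mem_Ici.2 (abs_nonneg y)) habs ha hb hab
      simpa [smul_eq_mul] using this
    linarith

theorem stmt_10 (n : ℕ) (p r α₁ α₂ : ℝ) (hp : 1 < p) (hpr : 1 / p + 1 / r = 1)
    (hα₁ : 0 < α₁) (hα₂ : 0 < α₂)
    (θb q₁ q₂ : Fin n → ℝ) (hθb : pnorm r θb = 1)
    (hq₁ : pnorm r q₁ ≤ α₁) (hq₂ : pnorm r q₂ ≤ α₂)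
    (hsum : q₁ + q₂ = (α₁ + α₂) • θb) :
    q₁ = α₁ • θb ∧ q₂ = α₂ • θb := by
  -- derive 1 < r
  have hp0 : 0 < p := lt_trans one_pos hp
  have h1p : 1 / p < 1 := by rw [div_lt_one hp0]; exact hp
  have h1p0 : 0 < 1 / p := by positivity
  have hr0 : 0 < r := by
    have h : 0 < 1 / r := by linarith
    exact (one_div_pos).mp h
  have hr : 1 < r := by
    have h : 1 / r < 1 := by linarith
    rwa [div_lt_one hr0] at h
  -- the r-th power sum
  set S : (Fin n → ℝ) → ℝ := fun v => ∑ i, |v i| ^ r with hSdef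
  have hSnn : ∀ v, 0 ≤ S v := fun v =>
    Finset.sum_nonneg fun i _ => Real.rpow_nonneg (abs_nonneg _) r
  have hSpow : ∀ v : Fin n → ℝ, ((S v) ^ (1 / r)) ^ r = S v := by
    intro v
    rw [one_div, Real.rpow_inv_rpow (hSnn v) hr0.ne']
  -- S θb = 1
  have hSθ : S θb = 1 := by
    have h : pnorm r θb = (S θb) ^ (1 / r) := rfl
    rw [h] at hθb
    calc S θb = ((S θb) ^ (1 / r)) ^ r := (hSpow θb).symm
      _ = 1 ^ r := by rw [hθb]
      _ = 1 := Real.one_rpow r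
  -- bounds on S q₁ and S q₂
  have key : ∀ (v : Fin n → ℝ) (c : ℝ), pnorm r v ≤ c → S v ≤ c ^ r := by
    intro v c h
    have hc : 0 ≤ c := le_trans (Real.rpow_nonneg (hSnn v) _) h
    have := Real.rpow_le_rpow (Real.rpow_nonneg (hSnn v) _) h hr0.le
    rwa [hSpow v] at this
  have hSq₁ : S q₁ ≤ α₁ ^ r := key q₁ α₁ hq₁
  have hSq₂ : S q₂ ≤ α₂ ^ r := key q₂ α₂ hq₂
  -- normalized vectors
  set u : Fin n → ℝ := α₁⁻¹ • q₁ with hu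
  set v : Fin n → ℝ := α₂⁻¹ • q₂ with hv
  have hSu : S u ≤ 1 := by
    have : S u = (α₁⁻¹) ^ r * S q₁ := by
      simp only [hSdef, hu, Pi.smul_apply, smul_eq_mul, abs_mul,
        abs_of_pos (inv_pos.mpr hα₁), Finset.mul_sum]
      refine Finset.sum_congr rfl fun i _ => ?_
      rw [Real.mul_rpow (inv_nonneg.mpr hα₁.le) (abs_nonneg _)]
    rw [this]
    calc (α₁⁻¹) ^ r * S q₁ ≤ (α₁⁻¹) ^ r * α₁ ^ r := by
          apply mul_le_mul_of_nonneg_left hSq₁ (Real.rpow_nonneg (inv_nonneg.mpr hα₁.le) r)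
      _ = (α₁⁻¹ * α₁) ^ r := (Real.mul_rpow (inv_nonneg.mpr hα₁.le) hα₁.le).symm
      _ = 1 := by rw [inv_mul_cancel₀ hα₁.ne', Real.one_rpow]
  have hSv : S v ≤ 1 := by
    have : S v = (α₂⁻¹) ^ r * S q₂ := by
      simp only [hSdef, hv, Pi.smul_apply, smul_eq_mul, abs_mul,
        abs_of_pos (inv_pos.mpr hα₂), Finset.mul_sum]
      refine Finset.sum_congr rfl fun i _ => ?_
      rw [Real.mul_rpow (inv_nonneg.mpr hα₂.le) (abs_nonneg _)]
    rw [this]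
    calc (α₂⁻¹) ^ r * S q₂ ≤ (α₂⁻¹) ^ r * α₂ ^ r := by
          apply mul_le_mul_of_nonneg_left hSq₂ (Real.rpow_nonneg (inv_nonneg.mpr hα₂.le) r)
      _ = (α₂⁻¹ * α₂) ^ r := (Real.mul_rpow (inv_nonneg.mpr hα₂.le) hα₂.le).symm
      _ = 1 := by rw [inv_mul_cancel₀ hα₂.ne', Real.one_rpow]
  -- convex combination
  set l : ℝ := α₁ / (α₁ + α₂) with hl
  have hαsum : 0 < α₁ + α₂ := by linarith
  have hl0 : 0 < l := div_pos hα₁ hαsum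
  have hl1 : 0 < 1 - l := by
    have : l < 1 := by rw [hl, div_lt_one hαsum]; linarith
    linarith
  have hθcomb : ∀ i, θb i = l * u i + (1 - l) * v i := by
    intro i
    have h := congrFun hsum i
    simp only [Pi.add_apply, Pi.smul_apply, smul_eq_mul] at h
    simp only [hu, hv, Pi.smul_apply, smul_eq_mul]
    have e1 : l * (α₁⁻¹ * q₁ i) = (α₁ + α₂)⁻¹ * q₁ i := by
      rw [hl]; field_simp
    have e2 : (1 - l) * (α₂⁻¹ * q₂ i) = (α₁ + α₂)⁻¹ * q₂ i := by
      rw [hl]; field_simp; ring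
    rw [e1, e2, ← mul_add, h, ← mul_assoc, inv_mul_cancel₀ hαsum.ne', one_mul]
  -- convexity bound
  have conv_le : ∀ i : Fin n, |θb i| ^ r ≤ l * |u i| ^ r + (1 - l) * |v i| ^ r := by
    intro i
    rw [hθcomb i]
    exact abs_rpow_convex_aux hr hl0 hl1 (by ring)
  have hcomb_le : l * S u + (1 - l) * S v ≤ 1 := by
    nlinarith [hSu, hSv]
  -- u = v by strict convexity
  have huv : u = v := by
    by_contra hne
    obtain ⟨j, hj⟩ := Function.ne_iff.mp hne
    have hstrict : S θb < l * S u + (1 - l) * S v := by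
      have hlt : ∑ i, |θb i| ^ r < ∑ i, (l * |u i| ^ r + (1 - l) * |v i| ^ r) := by
        apply Finset.sum_lt_sum (fun i _ => conv_le i) ⟨j, Finset.mem_univ j, ?_⟩
        rw [hθcomb j]
        exact abs_rpow_strict_convex_aux hr hj hl0 hl1 (by ring)
      calc S θb < ∑ i, (l * |u i| ^ r + (1 - l) * |v i| ^ r) := hlt
        _ = l * S u + (1 - l) * S v := by
            rw [Finset.sum_add_distrib, ← Finset.mul_sum, ← Finset.mul_sum]
    rw [hSθ] at hstrict
    linarith
  -- conclude θb = u
  have hθu : θb = u := by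
    funext i
    rw [hθcomb i, ← huv]
    ring
  have hq₁eq : q₁ = α₁ • θb := by
    rw [hθu, hu, smul_smul, mul_inv_cancel₀ hα₁.ne', one_smul]
  refine ⟨hq₁eq, ?_⟩
  have : q₁ + q₂ = q₁ + α₂ • θb := by
    rw [hsum, add_smul, hq₁eq]
  exact add_left_cancel this
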